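/- Let n = 3^s·t where s ≥ 1, t > 1 and 3 ∤ t. Let x ∈ [3n−1] and suppose 1 ≤ T(x) < s+1. Then there exists y in the H-orbit of x such that either T(y) = 0, or (y_0 = 0, y_1 = 2 and T(x) ≥ T(y)). -/

import Mathlib

lemma shuffleAux.div_lt (k n : ℕ) (x : Fin (k * n)) : (x : ℕ) / n < k := by
  have hx := x.isLt
  have hn : 0 < n := by
    rcases Nat.eq_zero_or_pos n with rfl | h
    · simp at hx
    · exact h
  exact (Nat.div_lt_iff_lt_mul hn).mpr hx

lemma shuffleAux.mod_lt (k n : ℕ) (x : Fin (k * n)) : (x : ℕ) % n < n := by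
  have hx := x.isLt
  have hn : 0 < n := by
    rcases Nat.eq_zero_or_pos n with rfl | h
    · simp at hx
    · exact h
  exact Nat.mod_lt _ hn

lemma shuffleAux.bound1 (k n : ℕ) (x : Fin (k * n)) :
    k * ((x : ℕ) % n) + (x : ℕ) / n < k * n := by
  have h1 := shuffleAux.mod_lt k n x
  have h2 := shuffleAux.div_lt k n x
  calc k * ((x : ℕ) % n) + (x : ℕ) / n
      < k * ((x : ℕ) % n) + k := by omega
    _ = k * ((x : ℕ) % n + 1) := by ring
    _ ≤ k * n := Nat.mul_le_mul_left _ (by omega)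

lemma shuffleAux.bound2 (k n : ℕ) (x : Fin (k * n)) (j : Fin k) :
    (x : ℕ) % n + (j : ℕ) * n < k * n := by
  have h1 := shuffleAux.mod_lt k n x
  have h2 := j.isLt
  calc (x : ℕ) % n + (j : ℕ) * n
      < n + (j : ℕ) * n := by omega
    _ = ((j : ℕ) + 1) * n := by ring
    _ ≤ k * n := Nat.mul_le_mul_right _ (by omega)

/-- The standard shuffle `σ` on a deck of `k * n` cards, where the card in position
`i + j·n` (`i ∈ [n]`, `j ∈ [k]`) is sent to position `k·i + j`; equivalently
`σ(x) = k·(x mod n) + ⌊x / n⌋`. -/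
noncomputable def stdShuffle (k n : ℕ) : Equiv.Perm (Fin (k * n)) :=
  Equiv.ofBijective
    (fun x => ⟨k * ((x : ℕ) % n) + (x : ℕ) / n, shuffleAux.bound1 k n x⟩)
    (Finite.injective_iff_bijective.mp (by
      intro x y hxy
      simp only [Fin.mk.injEq] at hxy
      have hk : 0 < k := lt_of_le_of_lt (Nat.zero_le _) (shuffleAux.div_lt k n x)
      have key : ∀ z : Fin (k * n),
          (k * ((z : ℕ) % n) + (z : ℕ) / n) % k = (z : ℕ) / n ∧
          (k * ((z : ℕ) % n) + (z : ℕ) / n) / k = (z : ℕ) % n := by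
        intro z
        have hz := shuffleAux.div_lt k n z
        constructor
        · rw [Nat.mul_add_mod, Nat.mod_eq_of_lt hz]
        · rw [Nat.mul_add_div hk, Nat.div_eq_of_lt hz, Nat.add_zero]
      obtain ⟨h1x, h2x⟩ := key x
      obtain ⟨h1y, h2y⟩ := key y
      rw [hxy] at h1x h2x
      have hd : (x : ℕ) / n = (y : ℕ) / n := by omega
      have hm : (x : ℕ) % n = (y : ℕ) % n := by omega
      apply Fin.ext
      rw [← Nat.div_add_mod (x : ℕ) n, ← Nat.div_add_mod (y : ℕ) n, hd, hm]))

/-- The permutation `ρ_τ` induced by a permutation `τ` of the `k` piles: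
`ρ_τ(i + j·n) = i + τ(j)·n` for `i ∈ [n]`, `j ∈ [k]`. -/
noncomputable def pilePerm (k n : ℕ) (τ : Equiv.Perm (Fin k)) : Equiv.Perm (Fin (k * n)) :=
  Equiv.ofBijective
    (fun x => ⟨(x : ℕ) % n + ((τ ⟨(x : ℕ) / n, shuffleAux.div_lt k n x⟩ : Fin k) : ℕ) * n,
      shuffleAux.bound2 k n x _⟩)
    (Finite.injective_iff_bijective.mp (by
      intro x y hxy
      simp only [Fin.mk.injEq] at hxy
      have hn : 0 < n := lt_of_le_of_lt (Nat.zero_le _) (shuffleAux.mod_lt k n x)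
      have key : ∀ z : Fin (k * n),
          ((z : ℕ) % n + ((τ ⟨(z : ℕ) / n, shuffleAux.div_lt k n z⟩ : Fin k) : ℕ) * n) % n
            = (z : ℕ) % n ∧
          ((z : ℕ) % n + ((τ ⟨(z : ℕ) / n, shuffleAux.div_lt k n z⟩ : Fin k) : ℕ) * n) / n
            = ((τ ⟨(z : ℕ) / n, shuffleAux.div_lt k n z⟩ : Fin k) : ℕ) := by
        intro z
        have h1 := shuffleAux.mod_lt k n z
        constructor
        · rw [Nat.add_mul_mod_self_right, Nat.mod_eq_of_lt h1]
        · rw [Nat.add_mul_div_right _ _ hn, Nat.div_eq_of_lt h1, Nat.zero_add]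
      obtain ⟨h1x, h2x⟩ := key x
      obtain ⟨h1y, h2y⟩ := key y
      rw [hxy] at h1x h2x
      have hm : (x : ℕ) % n = (y : ℕ) % n := by omega
      have hv : ((τ ⟨(x : ℕ) / n, shuffleAux.div_lt k n x⟩ : Fin k) : ℕ)
          = ((τ ⟨(y : ℕ) / n, shuffleAux.div_lt k n y⟩ : Fin k) : ℕ) := by omega
      have hτ : (⟨(x : ℕ) / n, shuffleAux.div_lt k n x⟩ : Fin k)
          = ⟨(y : ℕ) / n, shuffleAux.div_lt k n y⟩ := τ.injective (Fin.ext hv)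
      have hd : (x : ℕ) / n = (y : ℕ) / n := congrArg Fin.val hτ
      apply Fin.ext
      rw [← Nat.div_add_mod (x : ℕ) n, ← Nat.div_add_mod (y : ℕ) n, hd, hm]))

/-- The shuffle group `G_{k,kn}`, generated by the standard shuffle `σ` together with
the pile permutations `ρ_τ` for all `τ ∈ Sym([k])`. -/
noncomputable def shuffleGroup (k n : ℕ) : Subgroup (Equiv.Perm (Fin (k * n))) :=
  Subgroup.closure ({stdShuffle k n} ∪ Set.range (pilePerm k n))

/-- For `k = 3`, the subgroup `H = ⟨σ, ρ_{(01)}⟩` of `Sym([3n])`, where `(01)` is the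
transposition of `Sym([3])` swapping `0` and `1`. -/
noncomputable def shuffleH (n : ℕ) : Subgroup (Equiv.Perm (Fin (3 * n))) :=
  Subgroup.closure {stdShuffle 3 n, pilePerm 3 n (Equiv.swap 0 1)}

/-- For `x ∈ [3n]` with `n = 3^s·t`, the `i`-th base-3 digit `x_i` of `⌊x/t⌋`. -/
def digit (t x i : ℕ) : ℕ := (x / t / 3 ^ i) % 3

lemma digit_lt (t x i : ℕ) : digit t x i < 3 := Nat.mod_lt _ (by omega)

/-- `T(x) = |{i ∈ {0,...,s} : x_i = 2}|`, the number of base-3 digits of `⌊x/t⌋`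
(among positions `0,...,s`) equal to `2`. -/
def twoCount (s t x : ℕ) : ℕ :=
  ((Finset.range (s + 1)).filter (fun i => digit t x i = 2)).card

namespace LXY

/-- value of the standard shuffle on naturals -/
def sval (n y : ℕ) : ℕ := 3 * (y % n) + y / n

/-- value of the inverse shuffle on naturals -/
def sinv (n y : ℕ) : ℕ := y % 3 * n + y / 3

/-- iterate of `sval` -/
def itv (n : ℕ) : ℕ → ℕ → ℕ
  | 0, y => y
  | m+1, y => itv n m (sval n y)

lemma stdShuffle_val (n : ℕ) (x : Fin (3*n)) :
    (stdShuffle 3 n x : ℕ) = sval n (x : ℕ) := by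
  simp [stdShuffle, sval]

lemma sval_lt (n y : ℕ) (hy : y < 3*n) : sval n y < 3*n :=
  shuffleAux.bound1 3 n ⟨y, hy⟩

lemma sinv_lt (n y : ℕ) (hn : 0 < n) (hy : y < 3*n) : sinv n y < 3*n := by
  unfold sinv
  have h1 : y % 3 ≤ 2 := by omega
  have h2 : y / 3 < n := by omega
  have : y % 3 * n ≤ 2 * n := Nat.mul_le_mul_right n h1
  omega

lemma sval_sinv (n y : ℕ) (hy : y < 3*n) : sval n (sinv n y) = y := by
  unfold sval sinv
  have h2 : y / 3 < n := by omega
  rw [Nat.mul_comm (y % 3) n, Nat.mul_add_mod, Nat.mod_eq_of_lt h2,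
    Nat.mul_add_div (by omega : 0 < n), Nat.div_eq_of_lt h2]
  omega

lemma stdShuffle_apply_sinv (n : ℕ) (y : ℕ) (hn : 0 < n) (hy : y < 3*n) :
    stdShuffle 3 n ⟨sinv n y, sinv_lt n y hn hy⟩ = ⟨y, hy⟩ := by
  apply Fin.ext
  rw [stdShuffle_val]
  exact sval_sinv n y hy

lemma pilePerm_val_low (n : ℕ) (x : Fin (3*n)) (h : (x:ℕ) < n) :
    (pilePerm 3 n (Equiv.swap 0 1) x : ℕ) = (x:ℕ) + n := by
  have hd : (x:ℕ) / n = 0 := Nat.div_eq_of_lt h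
  have : (pilePerm 3 n (Equiv.swap 0 1) x : ℕ)
      = (x:ℕ) % n + ((Equiv.swap (0:Fin 3) 1 ⟨(x:ℕ)/n, shuffleAux.div_lt 3 n x⟩ : Fin 3) : ℕ) * n := by
    simp [pilePerm]
  rw [this]
  have h0 : (⟨(x:ℕ)/n, shuffleAux.div_lt 3 n x⟩ : Fin 3) = 0 := by
    apply Fin.ext; simp [hd]
  rw [h0, Equiv.swap_apply_left, Nat.mod_eq_of_lt h]
  simp

lemma pilePerm_val_mid (n : ℕ) (x : Fin (3*n)) (h1 : n ≤ (x:ℕ)) (h2 : (x:ℕ) < 2*n) :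
    (pilePerm 3 n (Equiv.swap 0 1) x : ℕ) = (x:ℕ) - n := by
  have hn : 0 < n := by omega
  have hd : (x:ℕ) / n = 1 := by
    rw [Nat.div_eq_of_lt_le] <;> omega
  have : (pilePerm 3 n (Equiv.swap 0 1) x : ℕ)
      = (x:ℕ) % n + ((Equiv.swap (0:Fin 3) 1 ⟨(x:ℕ)/n, shuffleAux.div_lt 3 n x⟩ : Fin 3) : ℕ) * n := by
    simp [pilePerm]
  rw [this]
  have h0 : (⟨(x:ℕ)/n, shuffleAux.div_lt 3 n x⟩ : Fin 3) = 1 := by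
    apply Fin.ext; simp [hd]
  rw [h0, Equiv.swap_apply_right]
  have hm : (x:ℕ) % n = (x:ℕ) - n := by
    conv_lhs => rw [show (x:ℕ) = ((x:ℕ) - n) + 1 * n by omega]
    rw [Nat.add_mul_mod_self_right, Nat.mod_eq_of_lt (by omega)]
  simp [hm]

/-- reachability in the group `H` -/
def Reach (n y z : ℕ) : Prop :=
  ∃ (hy : y < 3*n) (hz : z < 3*n), ∃ g ∈ shuffleH n, g ⟨y, hy⟩ = (⟨z, hz⟩ : Fin (3*n))

lemma Reach.refl (n y : ℕ) (hy : y < 3*n) : Reach n y y :=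
  ⟨hy, hy, 1, one_mem _, rfl⟩

lemma Reach.trans {n x y z : ℕ} (h1 : Reach n x y) (h2 : Reach n y z) : Reach n x z := by
  obtain ⟨hx, hy, g, hg, hgx⟩ := h1
  obtain ⟨hy', hz, g', hg', hgy⟩ := h2
  exact ⟨hx, hz, g' * g, mul_mem hg' hg, by
    rw [Equiv.Perm.mul_apply, hgx]; rw [Fin.mk.injEq] at hgy ⊢; convert hgy using 2⟩

lemma stdShuffle_mem (n : ℕ) : stdShuffle 3 n ∈ shuffleH n :=
  Subgroup.subset_closure (Set.mem_insert _ _)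

lemma pilePerm_mem (n : ℕ) : pilePerm 3 n (Equiv.swap 0 1) ∈ shuffleH n :=
  Subgroup.subset_closure (Set.mem_insert_of_mem _ rfl)

lemma reach_sinv (n y : ℕ) (hn : 0 < n) (hy : y < 3*n) : Reach n y (sinv n y) := by
  refine ⟨hy, sinv_lt n y hn hy, (stdShuffle 3 n)⁻¹, inv_mem (stdShuffle_mem n), ?_⟩
  rw [← stdShuffle_apply_sinv n y hn hy, ← Equiv.Perm.mul_apply, inv_mul_cancel, Equiv.Perm.one_apply]

end LXY
namespace LXY

lemma pow3_pos (i : ℕ) : 0 < 3^i := pow_pos (by norm_num) i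

/-- killing a high multiple of a power of 3 inside a digit -/
lemma digit_aux (s i r q : ℕ) (hi : i < s) : (r + q * 3^s) / 3^i % 3 = r / 3^i % 3 := by
  have h1 : 3^s = 3^(s-i-1) * 3 * 3^i := by
    rw [← pow_succ, ← pow_add]; congr 1; omega
  rw [h1, ← Nat.mul_assoc, Nat.add_mul_div_right _ _ (pow3_pos i),
    ← Nat.mul_assoc, Nat.add_mul_mod_self_right]

lemma mod_pow_digit (s i m : ℕ) (hi : i < s) : (m % 3^s) / 3^i % 3 = m / 3^i % 3 := by
  conv_rhs => rw [← Nat.mod_add_div m (3^s)]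
  rw [Nat.mul_comm (3^s) (m / 3^s), digit_aux s i _ _ hi]

lemma div_lt_pow (t y c : ℕ) (ht : 0 < t) (hy : y < c * t) : y / t < c :=
  (Nat.div_lt_iff_lt_mul ht).mpr (by omega)

/-- digits of the forward shuffle: shift up -/
lemma digit_sval (s t n : ℕ) (hn : n = 3^s*t) (ht : 0 < t) (x : ℕ) (hx : x < 3*n)
    (i : ℕ) (hi : i < s) : digit t (sval n x) (i+1) = digit t x i := by
  have hn0 : 0 < n := by rw [hn]; positivity
  have ha : x / n < 3 := div_lt_pow n x 3 hn0 (by omega)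
  have hXt : (x % n) % t < t := Nat.mod_lt _ ht
  have hu : t * ((x % n) / t) + (x % n) % t = x % n := Nat.div_add_mod _ _
  set u := (x % n) / t with hu_def
  set X := (x % n) % t with hX_def
  set a := x / n with ha_def
  have hsval : sval n x = (3*X + a) + (3*u) * t := by
    unfold sval; rw [← hu]; ring
  have he : (3*X + a) / t < 3 := div_lt_pow t _ 3 ht (by omega)
  have hdiv : sval n x / t = (3*X + a)/t + 3*u := by
    rw [hsval, Nat.add_mul_div_right _ _ ht]
  unfold digit
  rw [hdiv]
  have h2 : ((3*X + a)/t + 3*u) / 3^(i+1) = u / 3^i := by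
    rw [pow_succ', ← Nat.div_div_eq_div_mul,
      Nat.add_mul_div_left _ _ (by omega : (0:ℕ) < 3),
      Nat.div_eq_of_lt he, Nat.zero_add]
  rw [h2]
  have hu2 : u = (x / t) % 3^s := by
    rw [hu_def, hn, Nat.mul_comm (3^s) t, Nat.mod_mul_right_div_self]
  rw [hu2, mod_pow_digit s i _ hi]

/-- digits of the inverse shuffle: shift down -/
lemma digit_sinv_low (s t n : ℕ) (hn : n = 3^s*t) (ht : 0 < t) (y : ℕ) (hy : y < 3*n)
    (i : ℕ) (hi : i < s) : digit t (sinv n y) i = digit t y (i+1) := by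
  have hw : sinv n y = y/3 + (y % 3 * 3^s) * t := by
    unfold sinv; rw [hn]; ring
  have hdiv : sinv n y / t = y/3/t + y % 3 * 3^s := by
    rw [hw, Nat.add_mul_div_right _ _ ht]
  unfold digit
  rw [hdiv, digit_aux s i _ _ hi]
  have key : y/3/t/3^i = y/t/3^(i+1) := by
    have h3 : 3*t*3^i = t*3^(i+1) := by rw [pow_succ']; ring
    rw [Nat.div_div_eq_div_mul y 3 t, Nat.div_div_eq_div_mul, h3, ← Nat.div_div_eq_div_mul]
  rw [key]

lemma digit_sinv_top (s t n : ℕ) (hn : n = 3^s*t) (ht : 0 < t) (y : ℕ) (hy : y < 3*n) :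
    digit t (sinv n y) s = y % 3 := by
  have hw : sinv n y = y/3 + (y % 3 * 3^s) * t := by
    unfold sinv; rw [hn]; ring
  have hdiv : sinv n y / t = y/3/t + y % 3 * 3^s := by
    rw [hw, Nat.add_mul_div_right _ _ ht]
  have hr : y/3/t/3^s = 0 := by
    have h3 : 3*t*3^s = t*3^(s+1) := by rw [pow_succ']; ring
    have h2 : y < t*3^(s+1) := by
      rw [hn] at hy
      calc y < 3*(3^s*t) := hy
        _ = t*3^(s+1) := by rw [pow_succ']; ring
    rw [Nat.div_div_eq_div_mul y 3 t, Nat.div_div_eq_div_mul, h3, ← Nat.div_div_eq_div_mul]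
    apply Nat.div_eq_of_lt
    exact div_lt_pow t y (3^(s+1)) ht (by rw [Nat.mul_comm] at h2; exact h2)
  unfold digit
  rw [hdiv, Nat.add_mul_div_right _ _ (pow3_pos s), hr, Nat.zero_add,
    Nat.mod_mod_of_dvd _ (dvd_refl 3)]

/-- top digit equals the pile index -/
lemma digit_top (s t n : ℕ) (hn : n = 3^s*t) (ht : 0 < t) (z : ℕ) (hz : z < 3*n) :
    digit t z s = z / n := by
  have h1 : z / t / 3^s = z / n := by
    rw [Nat.div_div_eq_div_mul, Nat.mul_comm, hn]
  have h2 : z / n < 3 := div_lt_pow n z 3 (by rw [hn]; positivity) (by omega)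
  unfold digit
  rw [h1, Nat.mod_eq_of_lt h2]

lemma sval_lt_N (n y : ℕ) (hn0 : 0 < n) (hy : y < 3*n - 1) : sval n y < 3*n - 1 := by
  have h := Nat.div_add_mod y n
  have ha : y / n < 3 := div_lt_pow n y 3 hn0 (by omega)
  have hr : y % n < n := Nat.mod_lt _ hn0
  unfold sval
  interval_cases h : (y / n) <;> omega

lemma sval_eq_mod (n y : ℕ) (hn0 : 0 < n) (hy : y < 3*n - 1) :
    sval n y = 3*y % (3*n - 1) := by
  obtain ⟨n', rfl⟩ : ∃ n', n = n'+1 := ⟨n-1, by omega⟩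
  have key : 3*y = sval (n'+1) y + (y/(n'+1)) * (3*(n'+1) - 1) := by
    have e : 3*(n'+1) - 1 = 3*n' + 2 := by omega
    rw [e]
    unfold sval
    set q := y / (n'+1) with hq
    set r := y % (n'+1) with hrr
    have h : (n'+1) * q + r = y := Nat.div_add_mod y (n'+1)
    rw [← h]; ring
  rw [key, Nat.add_mul_mod_self_right, Nat.mod_eq_of_lt (sval_lt_N _ y hn0 hy)]

lemma itv_eq_mod (n : ℕ) (hn0 : 0 < n) :
    ∀ m y, y < 3*n - 1 → itv n m y = 3^m * y % (3*n - 1) := by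
  intro m
  induction m with
  | zero => intro y hy; simp [itv, Nat.mod_eq_of_lt hy]
  | succ m ih =>
    intro y hy
    show itv n m (sval n y) = _
    rw [ih (sval n y) (sval_lt_N n y hn0 hy), sval_eq_mod n y hn0 hy,
      Nat.mul_mod, Nat.mod_mod_of_dvd _ (dvd_refl _), ← Nat.mul_mod,
      ← Nat.mul_assoc, ← pow_succ]

lemma itv_lt_N (n : ℕ) (hn0 : 0 < n) (m y : ℕ) (hy : y < 3*n - 1) :
    itv n m y < 3*n - 1 := by
  rw [itv_eq_mod n hn0 m y hy]
  exact Nat.mod_lt _ (by omega)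

lemma digit_itv (s t n : ℕ) (hn : n = 3^s*t) (ht : 0 < t) :
    ∀ m y i, y < 3*n - 1 → i + m ≤ s →
      digit t (itv n m y) (i+m) = digit t y i := by
  intro m
  induction m with
  | zero => intro y i _ _; rfl
  | succ m ih =>
    intro y i hy him
    show digit t (itv n m (sval n y)) (i + (m+1)) = _
    have h1 : i + (m+1) = (i+1) + m := by omega
    rw [h1, ih (sval n y) (i+1) (sval_lt_N n y (by rw [hn]; positivity) hy) (by omega),
      digit_sval s t n hn ht y (by omega) i (by omega)]

lemma stdShuffle_pow_val (n : ℕ) :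
    ∀ m (y : ℕ) (hy : y < 3*n), (((stdShuffle 3 n)^m) ⟨y, hy⟩ : ℕ) = itv n m y := by
  intro m
  induction m with
  | zero => intro y hy; rfl
  | succ m ih =>
    intro y hy
    rw [pow_succ, Equiv.Perm.mul_apply]
    have h1 : stdShuffle 3 n ⟨y, hy⟩ = ⟨sval n y, sval_lt n y hy⟩ := by
      apply Fin.ext; rw [stdShuffle_val]
    rw [h1, ih (sval n y) (sval_lt n y hy)]
    rfl

end LXY
namespace LXY

lemma digit_zero_eq (t y : ℕ) : digit t y 0 = y / t % 3 := by
  unfold digit; rw [pow_zero, Nat.div_one]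

lemma digit_add_t_pos (s t y i : ℕ) (ht : 0 < t) (h0 : digit t y 0 = 0) (hi : 1 ≤ i) :
    digit t (y + t) i = digit t y i := by
  rw [digit_zero_eq] at h0
  obtain ⟨k, hk⟩ : ∃ k, y/t = 3*k := ⟨y/t/3, by omega⟩
  obtain ⟨i', rfl⟩ : ∃ i', i = i'+1 := ⟨i-1, by omega⟩
  unfold digit
  rw [Nat.add_div_right y ht, hk, pow_succ', ← Nat.div_div_eq_div_mul,
    ← Nat.div_div_eq_div_mul, Nat.mul_add_div (by omega), Nat.mul_div_cancel_left k (by omega : (0:ℕ) < 3)]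
  norm_num

lemma digit_add_t_zero (s t y : ℕ) (ht : 0 < t) (h0 : digit t y 0 = 0) :
    digit t (y + t) 0 = 1 := by
  rw [digit_zero_eq] at h0
  rw [digit_zero_eq, Nat.add_div_right y ht]
  omega

lemma sub_t_div (t y : ℕ) (ht : 0 < t) (h1 : 1 ≤ y / t) :
    (y - t) / t = y / t - 1 ∧ y - t = t * (y/t - 1) + y % t := by
  obtain ⟨w, hw⟩ : ∃ w, y/t = w + 1 := ⟨y/t - 1, by omega⟩
  have h := Nat.div_add_mod y t
  rw [hw] at h
  have e : t*(w+1) = t*w + t := by ring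
  rw [e] at h
  have h2 : y - t = t*w + y % t := by omega
  constructor
  · rw [h2, hw, Nat.mul_add_div ht, Nat.div_eq_of_lt (Nat.mod_lt _ ht)]; omega
  · rw [h2, hw, Nat.add_sub_cancel]

lemma digit_sub_t_pos (s t y i : ℕ) (ht : 0 < t) (h0 : digit t y 0 = 1) (hi : 1 ≤ i) :
    digit t (y - t) i = digit t y i := by
  rw [digit_zero_eq] at h0
  have h1 : 1 ≤ y/t := by
    rcases Nat.eq_zero_or_pos (y/t) with h|h
    · rw [h] at h0; simp at h0
    · exact h
  obtain ⟨hdiv, _⟩ := sub_t_div t y ht h1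
  obtain ⟨k, hk⟩ : ∃ k, y/t = 3*k + 1 := ⟨y/t/3, by omega⟩
  obtain ⟨i', rfl⟩ : ∃ i', i = i'+1 := ⟨i-1, by omega⟩
  unfold digit
  rw [hdiv, hk, pow_succ', ← Nat.div_div_eq_div_mul, ← Nat.div_div_eq_div_mul]
  have e1 : 3*k+1-1 = 3*k := by omega
  rw [e1, Nat.mul_div_cancel_left k (by omega : (0:ℕ) < 3), Nat.mul_add_div (by omega : (0:ℕ) < 3)]
  norm_num

lemma digit_sub_t_zero (s t y : ℕ) (ht : 0 < t) (h0 : digit t y 0 = 1) :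
    digit t (y - t) 0 = 0 := by
  rw [digit_zero_eq] at h0
  have h1 : 1 ≤ y/t := by
    rcases Nat.eq_zero_or_pos (y/t) with h|h
    · rw [h] at h0; simp at h0
    · exact h
  obtain ⟨hdiv, _⟩ := sub_t_div t y ht h1
  rw [digit_zero_eq, hdiv]
  omega

lemma twoCount_sum (s t y : ℕ) :
    twoCount s t y = ∑ i ∈ Finset.range (s+1), if digit t y i = 2 then 1 else 0 :=
  Finset.card_filter _ _

lemma twoCount_congr (s t y z : ℕ) (h0 : digit t z 0 = 2 ↔ digit t y 0 = 2)
    (h : ∀ i, 1 ≤ i → i ≤ s → digit t z i = digit t y i) :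
    twoCount s t z = twoCount s t y := by
  rw [twoCount_sum, twoCount_sum]
  apply Finset.sum_congr rfl
  intro i hi
  rw [Finset.mem_range] at hi
  rcases Nat.eq_zero_or_pos i with rfl | hpos
  · simp only [h0]
  · rw [h i hpos (by omega)]

lemma twoCount_sinv (s t n y : ℕ) (hn : n = 3^s*t) (ht : 0 < t) (hy : y < 3*n) :
    twoCount s t (sinv n y) + (if digit t y 0 = 2 then 1 else 0)
      = twoCount s t y + (if y % 3 = 2 then 1 else 0) := by
  rw [twoCount_sum, twoCount_sum, Finset.sum_range_succ, Finset.sum_range_succ']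
  rw [digit_sinv_top s t n hn ht y hy]
  have hcong : ∀ i ∈ Finset.range s,
      (if digit t (sinv n y) i = 2 then (1:ℕ) else 0) = if digit t y (i+1) = 2 then 1 else 0 := by
    intro i hi
    rw [Finset.mem_range] at hi
    rw [digit_sinv_low s t n hn ht y hy i hi]
  rw [Finset.sum_congr rfl hcong]
  ring

end LXY
namespace LXY

lemma n_pos (s t n : ℕ) (hn : n = 3^s*t) (ht : 0 < t) : 0 < n := by
  rw [hn]; positivity

lemma n_big (s t n : ℕ) (hn : n = 3^s*t) (hs : 1 ≤ s) (ht : 2 ≤ t) : 6 ≤ n := by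
  rw [hn]
  calc (6:ℕ) = 3^1*2 := by norm_num
  _ ≤ 3^s*t := Nat.mul_le_mul (Nat.pow_le_pow_right (by omega) hs) ht

/-- bound for the +t flip -/
lemma add_t_lt (s t n y : ℕ) (hn : n = 3^s*t) (ht : 0 < t) (hy : y < 3*n - 1)
    (h0 : digit t y 0 = 0) : y + t < 3*n - 1 := by
  rw [digit_zero_eq] at h0
  have hn0 : 0 < n := n_pos s t n hn ht
  have hvlt : y/t < 3*3^s := by
    apply div_lt_pow t y (3*3^s) ht
    calc y < 3*n := by omega
    _ = 3*3^s*t := by rw [hn]; ring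
  have hvle : y/t ≤ 3*3^s - 3 := by
    have h3 : 0 < 3^s := pow3_pos s
    omega
  have h1 : t*(y/t) ≤ t*(3*3^s-3) := Nat.mul_le_mul_left t hvle
  have h2 := Nat.div_add_mod y t
  have h3 : y % t < t := Nat.mod_lt _ ht
  have h4 : t*(3*3^s-3) + 3*t = t*(3*3^s) := by
    have h5 : 3 ≤ 3*3^s := by have := pow3_pos s; omega
    obtain ⟨K, hK⟩ : ∃ K, 3*3^s = K+3 := ⟨3*3^s-3, by omega⟩
    rw [hK, Nat.add_sub_cancel]; ring
  have h6 : t*(3*3^s) = 3*n := by rw [hn]; ring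
  omega

/-- the gadget flipping digit 0 from `0` to `1`: both directions of reach -/
lemma reach_add_t (s t n y : ℕ) (hn : n = 3^s*t) (hs : 1 ≤ s) (ht : 2 ≤ t)
    (hy : y < 3*n - 1) (h0 : digit t y 0 = 0) : Reach n y (y + t) := by
  have ht0 : 0 < t := by omega
  have hn0 : 0 < n := n_pos s t n hn ht0
  have hn6 : 6 ≤ n := n_big s t n hn hs ht
  have hyt : y + t < 3*n - 1 := add_t_lt s t n y hn ht0 hy h0
  set z := itv n s y with hz_def
  have hzN : z < 3*n - 1 := itv_lt_N n hn0 s y hy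
  have hdigz : digit t z s = 0 := by
    have := digit_itv s t n hn ht0 s y 0 hy (by omega)
    rw [Nat.zero_add] at this
    rw [hz_def, this, h0]
  have hztop : z / n = 0 := by
    rw [← digit_top s t n hn ht0 z (by omega)]; exact hdigz
  have hz_lt_n : z < n := by
    rcases Nat.lt_or_ge z n with h | h
    · exact h
    · exfalso; have : 1 ≤ z / n := (Nat.one_le_div_iff hn0).mpr h; omega
  -- value of the iterate on y + t
  have hmod : itv n s y = 3^s * y % (3*n-1) := itv_eq_mod n hn0 s y hy
  have hmod2 : itv n s (y+t) = z + n := by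
    rw [itv_eq_mod n hn0 s (y+t) hyt]
    have e1 : 3^s * (y+t) = 3^s*y + n := by rw [hn]; ring
    rw [e1, Nat.add_mod, ← hmod, ← hz_def, Nat.mod_eq_of_lt (show n < 3*n-1 by omega),
      Nat.mod_eq_of_lt (show z + n < 3*n-1 by omega)]
  -- assemble the group element
  have hyF : y < 3*n := by omega
  have hytF : y + t < 3*n := by omega
  have hzF : z < 3*n := by omega
  have hznF : z + n < 3*n := by omega
  have hA : ((stdShuffle 3 n)^s) ⟨y, hyF⟩ = ⟨z, hzF⟩ := by
    apply Fin.ext; rw [stdShuffle_pow_val n s y hyF]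
  have hB : ((stdShuffle 3 n)^s) ⟨y+t, hytF⟩ = ⟨z+n, hznF⟩ := by
    apply Fin.ext; rw [stdShuffle_pow_val n s (y+t) hytF]; exact hmod2
  have hC : pilePerm 3 n (Equiv.swap 0 1) ⟨z, hzF⟩ = ⟨z+n, hznF⟩ := by
    apply Fin.ext; exact pilePerm_val_low n ⟨z, hzF⟩ hz_lt_n
  refine ⟨hyF, hytF,
    ((stdShuffle 3 n)^s)⁻¹ * (pilePerm 3 n (Equiv.swap 0 1) * (stdShuffle 3 n)^s),
    mul_mem (inv_mem (pow_mem (stdShuffle_mem n) s))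
      (mul_mem (pilePerm_mem n) (pow_mem (stdShuffle_mem n) s)), ?_⟩
  rw [Equiv.Perm.mul_apply, Equiv.Perm.mul_apply, hA, hC, ← hB, ← Equiv.Perm.mul_apply, inv_mul_cancel, Equiv.Perm.one_apply]

lemma reach_sub_t (s t n y : ℕ) (hn : n = 3^s*t) (hs : 1 ≤ s) (ht : 2 ≤ t)
    (hy : y < 3*n - 1) (h0 : digit t y 0 = 1) : Reach n y (y - t) := by
  have ht0 : 0 < t := by omega
  have hn0 : 0 < n := n_pos s t n hn ht0
  have hn6 : 6 ≤ n := n_big s t n hn hs ht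
  have h1 : 1 ≤ y/t := by
    rw [digit_zero_eq] at h0
    rcases Nat.eq_zero_or_pos (y/t) with h|h
    · rw [h] at h0; simp at h0
    · exact h
  have hty : t ≤ y := by
    rcases Nat.lt_or_ge y t with h | h
    · rw [Nat.div_eq_of_lt h] at h1; omega
    · exact h
  have hyt : y - t < 3*n - 1 := by omega
  set z := itv n s y with hz_def
  have hzN : z < 3*n - 1 := itv_lt_N n hn0 s y hy
  have hdigz : digit t z s = 1 := by
    have := digit_itv s t n hn ht0 s y 0 hy (by omega)
    rw [Nat.zero_add] at this
    rw [hz_def, this, h0]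
  have hztop : z / n = 1 := by
    rw [← digit_top s t n hn ht0 z (by omega)]; exact hdigz
  have hz_ge : n ≤ z := (Nat.one_le_div_iff hn0).mp (by omega)
  have hz_lt : z < 2*n := by
    rcases Nat.lt_or_ge z (2*n) with h | h
    · exact h
    · exfalso
      have : 2 ≤ z / n := by
        calc 2 = 2*n/n := by rw [Nat.mul_div_cancel _ hn0]
        _ ≤ z/n := Nat.div_le_div_right h
      omega
  have hmod : itv n s y = 3^s * y % (3*n-1) := itv_eq_mod n hn0 s y hy
  have hmod2 : itv n s (y - t) = z - n := by
    rw [itv_eq_mod n hn0 s (y-t) hyt]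
    obtain ⟨y', hy'⟩ : ∃ y', y = y' + t := ⟨y - t, by omega⟩
    have e1 : 3^s * (y'+t) = 3^s*y' + n := by rw [hn]; ring
    have e2 : 3^s*y' % (3*n-1) = z - n := by
      have h3 : (3^s*y' + n) % (3*n-1) = z := by rw [← e1, ← hy', ← hmod, hz_def]
      have h4 := Nat.div_add_mod (3^s*y') (3*n-1)
      have h5 : (3^s*y' + n) % (3*n-1) =
          ((3^s*y') % (3*n-1) + n) % (3*n-1) := by rw [Nat.add_mod, Nat.mod_eq_of_lt (show n < 3*n-1 by omega)]
      have h6 : (3^s*y') % (3*n-1) < 3*n-1 := Nat.mod_lt _ (by omega)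
      rcases Nat.lt_or_ge ((3^s*y') % (3*n-1) + n) (3*n-1) with h7 | h7
      · rw [Nat.mod_eq_of_lt h7] at h5; omega
      · have h8 : ((3^s*y') % (3*n-1) + n) % (3*n-1)
            = (3^s*y') % (3*n-1) + n - (3*n-1) := by
          rw [Nat.mod_eq_sub_mod h7, Nat.mod_eq_of_lt (by omega)]
        rw [h8] at h5; omega
    rw [hy', Nat.add_sub_cancel, e2]
  have hyF : y < 3*n := by omega
  have hytF : y - t < 3*n := by omega
  have hzF : z < 3*n := by omega
  have hznF : z - n < 3*n := by omega
  have hA : ((stdShuffle 3 n)^s) ⟨y, hyF⟩ = ⟨z, hzF⟩ := by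
    apply Fin.ext; rw [stdShuffle_pow_val n s y hyF]
  have hB : ((stdShuffle 3 n)^s) ⟨y-t, hytF⟩ = ⟨z-n, hznF⟩ := by
    apply Fin.ext; rw [stdShuffle_pow_val n s (y-t) hytF]; exact hmod2
  have hC : pilePerm 3 n (Equiv.swap 0 1) ⟨z, hzF⟩ = ⟨z-n, hznF⟩ := by
    apply Fin.ext; exact pilePerm_val_mid n ⟨z, hzF⟩ hz_ge hz_lt
  refine ⟨hyF, hytF,
    ((stdShuffle 3 n)^s)⁻¹ * (pilePerm 3 n (Equiv.swap 0 1) * (stdShuffle 3 n)^s),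
    mul_mem (inv_mem (pow_mem (stdShuffle_mem n) s))
      (mul_mem (pilePerm_mem n) (pow_mem (stdShuffle_mem n) s)), ?_⟩
  rw [Equiv.Perm.mul_apply, Equiv.Perm.mul_apply, hA, hC, ← hB, ← Equiv.Perm.mul_apply, inv_mul_cancel, Equiv.Perm.one_apply]

end LXY
namespace LXY

lemma sinv_lt_N (n y : ℕ) (h3n : 3 ∣ n) (hy : y < 3*n - 1) : sinv n y < 3*n - 1 := by
  obtain ⟨k, rfl⟩ := h3n
  unfold sinv
  rcases (show y % 3 = 0 ∨ y % 3 = 1 ∨ y % 3 = 2 by omega) with h|h|h <;> rw [h] <;> omega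

lemma mod_s1 (s r x : ℕ) (h : x = r + (s+1)) (hr : r ≤ s) : x % (s+1) = r := by
  subst h
  rw [show r + (s+1) = r + 1*(s+1) by ring, Nat.add_mul_mod_self_right,
    Nat.mod_eq_of_lt (by omega)]

lemma exists_Pw (s t y : ℕ) (h1 : 1 ≤ twoCount s t y) (h2 : twoCount s t y ≤ s) :
    ∃ a, a ≤ s ∧ digit t y a = 2 ∧ digit t y ((a+s)%(s+1)) ≠ 2 := by
  by_contra hcon
  push_neg at hcon
  have hne : ((Finset.range (s+1)).filter (fun i => digit t y i = 2)).Nonempty := by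
    apply Finset.card_pos.mp
    unfold twoCount at h1
    omega
  obtain ⟨i, hi⟩ := hne
  rw [Finset.mem_filter, Finset.mem_range] at hi
  have hcl : ∀ m, digit t y ((i + m*s) % (s+1)) = 2 := by
    intro m
    induction m with
    | zero =>
      rw [Nat.zero_mul, Nat.add_zero, Nat.mod_eq_of_lt (by omega)]
      exact hi.2
    | succ m ih =>
      have hle : (i + m*s) % (s+1) ≤ s := by
        have := Nat.mod_lt (i+m*s) (show 0 < s+1 by omega); omega
      have hstep := hcon _ hle ih
      have e : ((i + m*s) % (s+1) + s) % (s+1) = (i + (m+1)*s) % (s+1) := by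
        rw [Nat.mod_add_mod]; congr 1; ring
      rw [e] at hstep; exact hstep
  have hall : ∀ j ∈ Finset.range (s+1), digit t y j = 2 := by
    intro j hj
    rw [Finset.mem_range] at hj
    obtain ⟨d, hd⟩ : ∃ d, s = j + d := ⟨s - j, by omega⟩
    have hm := hcl (i + d + 1)
    have e2 : i + (i+d+1)*s = (s+1)*(i+d) + j := by rw [hd]; ring
    rw [e2, Nat.mul_add_mod, Nat.mod_eq_of_lt (by omega)] at hm
    exact hm
  have hcard : twoCount s t y = s+1 := by
    unfold twoCount
    rw [Finset.filter_true_of_mem hall, Finset.card_range]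
  omega

end LXY
namespace LXY

lemma t_le_of_digit0_one (t y : ℕ) (ht : 0 < t) (h : digit t y 0 = 1) : t ≤ y := by
  rw [digit_zero_eq] at h
  have h1 : 1 ≤ y/t := by
    rcases Nat.eq_zero_or_pos (y/t) with hh|hh
    · rw [hh] at h; simp at h
    · exact hh
  rcases Nat.lt_or_ge y t with hh | hh
  · rw [Nat.div_eq_of_lt hh] at h1; omega
  · exact hh

lemma core (s t n : ℕ) (hn : n = 3^s*t) (hs : 1 ≤ s) (ht : 2 ≤ t) (h3 : t % 3 ≠ 0) :
    ∀ C M y a, y < 3*n - 1 → 1 ≤ twoCount s t y → twoCount s t y ≤ s →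
      twoCount s t y ≤ C → a ≤ s → digit t y a = 2 →
      digit t y ((a+s)%(s+1)) ≠ 2 → (if a = 0 then s+1 else a) ≤ M →
      ∃ z, z < 3*n - 1 ∧ Reach n y z ∧
        (twoCount s t z = 0 ∨
          (digit t z 0 = 0 ∧ digit t z 1 = 2 ∧ twoCount s t z ≤ twoCount s t y)) := by
  have ht0 : 0 < t := by omega
  have hn0 : 0 < n := n_pos s t n hn ht0
  have h3n : 3 ∣ n := by
    rw [hn, show s = (s-1)+1 by omega, pow_succ']
    exact ⟨3^(s-1)*t, by ring⟩
  intro C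
  induction C with
  | zero =>
    intro M y a hyN h1 h2 hC ha hda hpreda hmeas
    omega
  | succ C ihC =>
    intro M
    induction M with
    | zero =>
      intro y a hyN h1 h2 hC ha hda hpreda hmeas
      by_cases h : a = 0
      · rw [if_pos h] at hmeas; omega
      · rw [if_neg h] at hmeas; omega
    | succ M ihM =>
      intro y a hyN h1 h2 hC ha hda hpreda hmeas
      by_cases hA1 : a = 1
      · -- stop: digit 1 is 2, digit 0 is not 2
        subst hA1
        have hpred0 : (1+s)%(s+1) = 0 := by rw [Nat.add_comm]; exact Nat.mod_self _
        rw [hpred0] at hpreda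
        have hd0lt := digit_lt t y 0
        rcases (show digit t y 0 = 0 ∨ digit t y 0 = 1 by omega) with h | h
        · exact ⟨y, hyN, Reach.refl n y (by omega), Or.inr ⟨h, hda, le_refl _⟩⟩
        · refine ⟨y - t, by omega, reach_sub_t s t n y hn hs ht hyN h, Or.inr ?_⟩
          have hz0 : digit t (y-t) 0 = 0 := digit_sub_t_zero s t y ht0 h
          have hz1 : digit t (y-t) 1 = 2 := by
            rw [digit_sub_t_pos s t y 1 ht0 h (by omega)]; exact hda
          have hcnt : twoCount s t (y-t) = twoCount s t y := by
            apply twoCount_congr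
            · rw [hz0, h]; constructor <;> omega
            · intro i hi1 _; exact digit_sub_t_pos s t y i ht0 h hi1
          exact ⟨hz0, hz1, le_of_eq hcnt⟩
      · have hwN0 : sinv n y < 3*n - 1 := sinv_lt_N n y h3n hyN
        by_cases hA0 : digit t y 0 = 2
        · -- pop a 2 from the bottom
          have hR : Reach n y (sinv n y) := reach_sinv n y hn0 (by omega)
          have hcnteq := twoCount_sinv s t n y hn ht0 (by omega)
          rw [if_pos hA0] at hcnteq
          by_cases hτ : y % 3 = 2
          · rw [if_pos hτ] at hcnteq
            have hcw : twoCount s t (sinv n y) = twoCount s t y := by omega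
            have hdwtop : digit t (sinv n y) s = 2 := by
              rw [digit_sinv_top s t n hn ht0 y (by omega)]; exact hτ
            rcases Nat.eq_zero_or_pos a with rfl | hapos
            · have hpzs : (0+s)%(s+1) = s := by
                rw [Nat.zero_add]; exact Nat.mod_eq_of_lt (by omega)
              rw [hpzs] at hpreda
              have hnew_pred : (s+s)%(s+1) = s-1 := mod_s1 s (s-1) (s+s) (by omega) (by omega)
              have hdw_pred : digit t (sinv n y) (s-1) = digit t y s := by
                have hlow := digit_sinv_low s t n hn ht0 y (by omega) (s-1) (by omega)
                rw [hlow, show s-1+1 = s by omega]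
              rw [if_pos rfl] at hmeas
              obtain ⟨z, hzN, hrz, hgz⟩ := ihM (sinv n y) s hwN0 (by omega) (by omega) (by omega)
                (le_refl s) hdwtop (by rw [hnew_pred, hdw_pred]; exact hpreda)
                (by rw [if_neg (by omega : ¬ s = 0)]; omega)
              refine ⟨z, hzN, hR.trans hrz, ?_⟩
              rcases hgz with h | ⟨hb1, hb2, hb3⟩
              · exact Or.inl h
              · exact Or.inr ⟨hb1, hb2, by omega⟩
            · have ha2 : 2 ≤ a := by omega
              have hpa : (a+s)%(s+1) = a-1 := mod_s1 s (a-1) (a+s) (by omega) (by omega)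
              rw [hpa] at hpreda
              have hdw1 : digit t (sinv n y) (a-1) = 2 := by
                have hlow := digit_sinv_low s t n hn ht0 y (by omega) (a-1) (by omega)
                rw [hlow, show a-1+1 = a by omega]; exact hda
              have hnp : (a-1+s)%(s+1) = a-2 := mod_s1 s (a-2) (a-1+s) (by omega) (by omega)
              have hdw2 : digit t (sinv n y) (a-2) = digit t y (a-1) := by
                have hlow := digit_sinv_low s t n hn ht0 y (by omega) (a-2) (by omega)
                rw [hlow, show a-2+1 = a-1 by omega]
              rw [if_neg (by omega : ¬ a = 0)] at hmeas
              obtain ⟨z, hzN, hrz, hgz⟩ := ihM (sinv n y) (a-1) hwN0 (by omega) (by omega)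
                (by omega) (by omega) hdw1 (by rw [hnp, hdw2]; exact hpreda)
                (by rw [if_neg (by omega : ¬ a-1 = 0)]; omega)
              refine ⟨z, hzN, hR.trans hrz, ?_⟩
              rcases hgz with h | ⟨hb1, hb2, hb3⟩
              · exact Or.inl h
              · exact Or.inr ⟨hb1, hb2, by omega⟩
          · -- the count drops
            rw [if_neg hτ] at hcnteq
            rcases Nat.eq_zero_or_pos (twoCount s t (sinv n y)) with hz0 | hpos
            · exact ⟨sinv n y, hwN0, hR, Or.inl hz0⟩
            · obtain ⟨a', ha1', ha2', ha3'⟩ := exists_Pw s t (sinv n y) hpos (by omega)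
              obtain ⟨z, hzN, hrz, hgz⟩ := ihC (s+1) (sinv n y) a' hwN0 hpos (by omega)
                (by omega) ha1' ha2' ha3' (by split_ifs <;> omega)
              refine ⟨z, hzN, hR.trans hrz, ?_⟩
              rcases hgz with h | ⟨hb1, hb2, hb3⟩
              · exact Or.inl h
              · exact Or.inr ⟨hb1, hb2, by omega⟩
        · -- bottom digit is 0 or 1 : safe backward step
          have ha0 : a ≠ 0 := by intro h; rw [h] at hda; exact hA0 hda
          have ha2 : 2 ≤ a := by omega
          have hd0lt := digit_lt t y 0
          obtain ⟨y', hry', hy'N, hy'3, hd0', hdig'⟩ :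
              ∃ y', Reach n y y' ∧ y' < 3*n - 1 ∧ y' % 3 ≠ 2 ∧ digit t y' 0 ≠ 2 ∧
                ∀ i, 1 ≤ i → digit t y' i = digit t y i := by
            by_cases hy3 : y % 3 = 2
            · rcases (show digit t y 0 = 0 ∨ digit t y 0 = 1 by omega) with h | h
              · refine ⟨y + t, reach_add_t s t n y hn hs ht hyN h,
                  add_t_lt s t n y hn ht0 hyN h, ?_, ?_, ?_⟩
                · intro hcon; apply h3; omega
                · rw [digit_add_t_zero s t y ht0 h]; omega
                · intro i hi; exact digit_add_t_pos s t y i ht0 h hi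
              · have hty : t ≤ y := t_le_of_digit0_one t y ht0 h
                refine ⟨y - t, reach_sub_t s t n y hn hs ht hyN h, by omega, ?_, ?_, ?_⟩
                · intro hcon; apply h3; omega
                · rw [digit_sub_t_zero s t y ht0 h]; omega
                · intro i hi; exact digit_sub_t_pos s t y i ht0 h hi
            · exact ⟨y, Reach.refl n y (by omega), hyN, hy3, hA0, fun i _ => rfl⟩
          have hw'N : sinv n y' < 3*n - 1 := sinv_lt_N n y' h3n hy'N
          have hRw : Reach n y (sinv n y') := hry'.trans (reach_sinv n y' hn0 (by omega))
          have hcnty' : twoCount s t y' = twoCount s t y := by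
            apply twoCount_congr
            · constructor
              · intro hh; exact absurd hh hd0'
              · intro hh; exact absurd hh hA0
            · intro i hi1 _; exact hdig' i hi1
          have hcnteq := twoCount_sinv s t n y' hn ht0 (by omega)
          rw [if_neg hd0', if_neg hy'3] at hcnteq
          have hpa : (a+s)%(s+1) = a-1 := mod_s1 s (a-1) (a+s) (by omega) (by omega)
          rw [hpa] at hpreda
          have hdw1 : digit t (sinv n y') (a-1) = 2 := by
            have hlow := digit_sinv_low s t n hn ht0 y' (by omega) (a-1) (by omega)
            rw [hlow, show a-1+1 = a by omega, hdig' a (by omega)]; exact hda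
          have hnp : (a-1+s)%(s+1) = a-2 := mod_s1 s (a-2) (a-1+s) (by omega) (by omega)
          have hdw2 : digit t (sinv n y') (a-2) = digit t y (a-1) := by
            have hlow := digit_sinv_low s t n hn ht0 y' (by omega) (a-2) (by omega)
            rw [hlow, show a-2+1 = a-1 by omega, hdig' (a-1) (by omega)]
          rw [if_neg ha0] at hmeas
          obtain ⟨z, hzN, hrz, hgz⟩ := ihM (sinv n y') (a-1) hw'N (by omega) (by omega)
            (by omega) (by omega) hdw1 (by rw [hnp, hdw2]; exact hpreda)
            (by rw [if_neg (by omega : ¬ a-1 = 0)]; omega)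
          refine ⟨z, hzN, hRw.trans hrz, ?_⟩
          rcases hgz with h | ⟨hb1, hb2, hb3⟩
          · exact Or.inl h
          · exact Or.inr ⟨hb1, hb2, by omega⟩

end LXY
theorem lemma_xy (s t n : ℕ) (hs : 1 ≤ s) (ht : 1 < t) (h3t : ¬ 3 ∣ t) (hn : n = 3 ^ s * t)
    (x : Fin (3 * n)) (hx : (x : ℕ) < 3 * n - 1)
    (hT1 : 1 ≤ twoCount s t (x : ℕ)) (hT2 : twoCount s t (x : ℕ) < s + 1) :
    ∃ g ∈ shuffleH n,
      twoCount s t ((g x : ℕ)) = 0 ∨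
        (digit t ((g x : ℕ)) 0 = 0 ∧ digit t ((g x : ℕ)) 1 = 2 ∧
          twoCount s t ((g x : ℕ)) ≤ twoCount s t (x : ℕ)) := by
  have ht2 : 2 ≤ t := ht
  have h3 : t % 3 ≠ 0 := fun h => h3t (Nat.dvd_of_mod_eq_zero h)
  obtain ⟨a, ha1, ha2, ha3⟩ := LXY.exists_Pw s t (x : ℕ) hT1 (by omega)
  obtain ⟨z, hzN, hr, hgoal⟩ := LXY.core s t n hn hs ht2 h3 (twoCount s t (x : ℕ)) (s+1)
    (x : ℕ) a hx hT1 (by omega) le_rfl ha1 ha2 ha3 (by split_ifs <;> omega)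
  obtain ⟨hy', hz', g, hg, hgx⟩ := hr
  refine ⟨g, hg, ?_⟩
  have hx_eta : (⟨(x : ℕ), hy'⟩ : Fin (3*n)) = x := rfl
  rw [hx_eta] at hgx
  rw [hgx]
  exact hgoal
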